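/- Let g, h ≥ 1 with g + h = j, and let 0 ≤ γ ≤ γ_1 ≤ γ_2 ≤ 1 - η with r = (g-1)(1-γ_2) + (h-1)(1-γ_1) + 1 - γ fixed, as well as γ_2 fixed. Then χ(A_{γ_2}^{(g)} ⊞_γ A_{γ_1}^{(h)}), viewed as a function of γ under the constraint (h-1)γ_1 + γ = const, is minimized at γ = γ_1 (i.e., it is monotone decreasing in γ on the allowed range). -/

import Mathlib

/-- `χ(B)`: the sum of all the entries of `B⁻¹`. -/
noncomputable def chi {ι : Type*} [Fintype ι] [DecidableEq ι] (B : Matrix ι ι ℝ) : ℝ :=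
  ∑ i, ∑ l, B⁻¹ i l

/-- The equidistant matrix `A_r^{(j)}`. -/
def eqMat (j : ℕ) (r : ℝ) : Matrix (Fin j) (Fin j) ℝ :=
  Matrix.of fun i l => if i = l then 1 else r

/-- The block sum `A₁ ⊞_s A₂`. -/
def blockSum {g h : ℕ} (A₁ : Matrix (Fin g) (Fin g) ℝ) (A₂ : Matrix (Fin h) (Fin h) ℝ)
    (s : ℝ) : Matrix (Fin g ⊕ Fin h) (Fin g ⊕ Fin h) ℝ :=
  Matrix.fromBlocks A₁ (Matrix.of fun _ _ => s) (Matrix.of fun _ _ => s) A₂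

lemma sum_ite_mul_ite {n : ℕ} (i j : Fin n) (c d e f : ℝ) :
    ∑ k, (if i = k then c else d) * (if k = j then e else f)
      = n*d*f + d*(e-f) + (c-d)*f + (if i = j then (c-d)*(e-f) else 0) := by
  have hk : ∀ k : Fin n, (if i = k then c else d) * (if k = j then e else f)
      = d*f + (if k = j then d*(e-f) else 0) + (if i = k then (c-d)*f else 0)
        + (if i = k then (if k = j then (c-d)*(e-f) else 0) else 0) := by
    intro k
    by_cases h1 : i = k
    · subst h1
      by_cases h2 : i = j <;> simp [h2] <;> ring
    · by_cases h2 : k = j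
      · subst h2
        simp [h1]; ring
      · simp [h1, h2]
  simp only [hk, Finset.sum_add_distrib, Finset.sum_const, Finset.sum_ite_eq,
    Finset.sum_ite_eq', Finset.mem_univ, if_true, Finset.card_univ, Fintype.card_fin,
    nsmul_eq_mul]
  ring

lemma sum_ite_row {n : ℕ} (i : Fin n) (c d : ℝ) :
    ∑ l, (if i = l then c else d) = n*d + (c-d) := by
  have hk : ∀ l : Fin n, (if i = l then c else d) = d + (if i = l then c - d else 0) := by
    intro l; by_cases h1 : i = l <;> simp [h1]
  simp only [hk, Finset.sum_add_distrib, Finset.sum_const, Finset.sum_ite_eq,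
    Finset.mem_univ, if_true, Finset.card_univ, Fintype.card_fin, nsmul_eq_mul]

lemma sum_ite_col {n : ℕ} (j : Fin n) (c d : ℝ) :
    ∑ l, (if l = j then c else d) = n*d + (c-d) := by
  have hk : ∀ l : Fin n, (if l = j then c else d) = d + (if l = j then c - d else 0) := by
    intro l; by_cases h1 : l = j <;> simp [h1]
  simp only [hk, Finset.sum_add_distrib, Finset.sum_const, Finset.sum_ite_eq',
    Finset.mem_univ, if_true, Finset.card_univ, Fintype.card_fin, nsmul_eq_mul]

lemma chi_formula (g h : ℕ) (a b s : ℝ) (ha : 1 - a ≠ 0) (hb : 1 - b ≠ 0)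
    (hP : 1 + ((g:ℝ)-1)*a ≠ 0) (hQ : 1 + ((h:ℝ)-1)*b ≠ 0)
    (hD : (1 + ((g:ℝ)-1)*a) * (1 + ((h:ℝ)-1)*b) - g*h*s^2 ≠ 0) :
    chi (blockSum (eqMat g a) (eqMat h b) s)
      = ((g:ℝ)*(1 + ((h:ℝ)-1)*b) + h*(1 + ((g:ℝ)-1)*a) - 2*g*h*s)
        / ((1 + ((g:ℝ)-1)*a) * (1 + ((h:ℝ)-1)*b) - g*h*s^2) := by
  set P : ℝ := 1 + ((g:ℝ)-1)*a with hPdef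
  set Q : ℝ := 1 + ((h:ℝ)-1)*b with hQdef
  have hD' : P*Q - (g:ℝ)*h*s^2 ≠ 0 := hD
  set D : ℝ := P*Q - (g:ℝ)*h*s^2 with hDdef
  set z : ℝ := -s/D with hzdef
  set x : ℝ := 1/(1-a) with hxdef
  set y : ℝ := -(a*x + s*h*z)/P with hydef
  set w : ℝ := 1/(1-b) with hwdef
  set v : ℝ := -(b*w + s*g*z)/Q with hvdef
  have hx1 : (1-a)*x = 1 := by rw [hxdef]; field_simp
  have hw1 : (1-b)*w = 1 := by rw [hwdef]; field_simp
  have hy1 : P*y + a*x + (h:ℝ)*s*z = 0 := by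
    rw [hydef]; field_simp; ring
  have hv1 : Q*v + b*w + (g:ℝ)*s*z = 0 := by
    rw [hvdef]; field_simp; ring
  have hXs : x + (g:ℝ)*y = Q/D := by
    rw [hydef, hxdef, hzdef]
    field_simp
    rw [hDdef]
    ring
  have hWs : w + (h:ℝ)*v = P/D := by
    rw [hvdef, hwdef, hzdef]
    field_simp
    rw [hDdef]
    ring
  have hz1 : P*z + s*((h:ℝ)*v + w) = 0 := by
    have : (h:ℝ)*v + w = P/D + ((h:ℝ)-1)*0 := by rw [← hWs]; ring
    rw [hzdef]
    calc P*(-s/D) + s*((h:ℝ)*v + w) = P*(-s/D) + s*(P/D) := by rw [← hWs]; ring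
    _ = 0 := by field_simp; ring
  have hz2 : s*((g:ℝ)*y + x) + Q*z = 0 := by
    rw [hzdef]
    calc s*((g:ℝ)*y + x) + Q*(-s/D) = s*(Q/D) + Q*(-s/D) := by rw [← hXs]; ring
    _ = 0 := by field_simp; ring
  set N : Matrix (Fin g ⊕ Fin h) (Fin g ⊕ Fin h) ℝ :=
    Matrix.fromBlocks (Matrix.of fun i l => if i = l then x + y else y)
      (Matrix.of fun _ _ => z) (Matrix.of fun _ _ => z)
      (Matrix.of fun i l => if i = l then w + v else v) with hNdef
  have hinv : (blockSum (eqMat g a) (eqMat h b) s)⁻¹ = N := by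
    apply Matrix.inv_eq_right_inv
    ext i j
    rcases i with i | i <;> rcases j with j | j <;>
      simp only [Matrix.mul_apply, Fintype.sum_sum_type, blockSum, eqMat, hNdef,
        Matrix.fromBlocks_apply₁₁, Matrix.fromBlocks_apply₁₂, Matrix.fromBlocks_apply₂₁,
        Matrix.fromBlocks_apply₂₂, Matrix.of_apply, Matrix.one_apply, Sum.inl.injEq,
        Sum.inr.injEq, reduceCtorEq, if_false]
    · rw [sum_ite_mul_ite]
      simp only [Finset.sum_const, Finset.card_univ, Fintype.card_fin, nsmul_eq_mul]
      split_ifs with hij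
      · linear_combination hy1 + hx1
      · linear_combination hy1
    · rw [← Finset.sum_mul, ← Finset.mul_sum, sum_ite_row, sum_ite_col]
      linear_combination hz1 - z * hPdef
    · rw [← Finset.mul_sum, ← Finset.sum_mul, sum_ite_row, sum_ite_col]
      linear_combination hz2 - z * hQdef
    · rw [sum_ite_mul_ite]
      simp only [Finset.sum_const, Finset.card_univ, Fintype.card_fin, nsmul_eq_mul]
      split_ifs with hij
      · linear_combination hv1 + hw1 - v * hQdef
      · linear_combination hv1 - v * hQdef
  rw [chi, hinv]
  rw [Fintype.sum_sum_type]
  simp only [hNdef, Fintype.sum_sum_type, Matrix.fromBlocks_apply₁₁, Matrix.fromBlocks_apply₁₂,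
    Matrix.fromBlocks_apply₂₁, Matrix.fromBlocks_apply₂₂, Matrix.of_apply,
    sum_ite_row, Finset.sum_const, Finset.card_univ, Fintype.card_fin, nsmul_eq_mul]
  have e1 : (g:ℝ)*y + (x + y - y) = Q/D := by rw [← hXs]; ring
  have e2 : (h:ℝ)*v + (w + v - v) = P/D := by rw [← hWs]; ring
  rw [e1, e2, hzdef]
  field_simp
  ring

set_option maxHeartbeats 1000000 in
/-- Lemma r3: with `γ₂` and `r = (g-1)(1-γ₂)+(h-1)(1-γ₁)+1-γ` fixed
(equivalently `(h-1)γ₁ + γ` fixed), `χ(A_{γ₂}^{(g)} ⊞_γ A_{γ₁}^{(h)})` is minimized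
at `γ = γ₁`; at that point `γ₁ = γ = γ̃₁ := ((h-1)γ₁ + γ)/h`. -/
theorem chi_blockSum_eqMat_min {η : ℝ} (hη : 0 < η) (g h : ℕ) (hg : 1 ≤ g) (hh : 1 ≤ h)
    (γ γ₁ γ₂ : ℝ) (h0 : 0 ≤ γ) (h1 : γ ≤ γ₁) (h2 : γ₁ ≤ γ₂) (h3 : γ₂ ≤ 1 - η) :
    chi (blockSum (eqMat g γ₂) (eqMat h ((((h : ℝ) - 1) * γ₁ + γ) / h))
        ((((h : ℝ) - 1) * γ₁ + γ) / h)) ≤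
      chi (blockSum (eqMat g γ₂) (eqMat h γ₁) γ) := by
  have hg' : (1:ℝ) ≤ g := by exact_mod_cast hg
  have hh' : (1:ℝ) ≤ h := by exact_mod_cast hh
  have hh0 : (h:ℝ) ≠ 0 := by linarith
  set t : ℝ := (((h : ℝ) - 1) * γ₁ + γ) / h with htdef
  have hht : (h:ℝ)*t = ((h:ℝ)-1)*γ₁ + γ := by rw [htdef]; field_simp
  have ht1 : γ ≤ t := by
    rw [htdef, le_div_iff₀ (by linarith : (0:ℝ) < h)]
    nlinarith
  have ht2 : t ≤ γ₁ := by
    rw [htdef, div_le_iff₀ (by linarith : (0:ℝ) < h)]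
    nlinarith
  have h0t : 0 ≤ t := le_trans h0 ht1
  have hγ2 : γ₂ < 1 := by linarith
  have hγ20 : 0 ≤ γ₂ := by linarith
  -- positivity facts
  have hPpos : (0:ℝ) < 1 + ((g:ℝ)-1)*γ₂ := by nlinarith
  have hQpos : (0:ℝ) < 1 + ((h:ℝ)-1)*γ₁ := by nlinarith
  have hQtpos : (0:ℝ) < 1 + ((h:ℝ)-1)*t := by nlinarith
  have hPg : (g:ℝ)*γ + η ≤ 1 + ((g:ℝ)-1)*γ₂ := by nlinarith
  have hQh : (h:ℝ)*γ + η ≤ 1 + ((h:ℝ)-1)*γ₁ := by nlinarith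
  have hPgt : (g:ℝ)*t + η ≤ 1 + ((g:ℝ)-1)*γ₂ := by nlinarith
  have hQht : (h:ℝ)*t + η ≤ 1 + ((h:ℝ)-1)*t := by nlinarith
  have hDpos : (0:ℝ) < (1 + ((g:ℝ)-1)*γ₂) * (1 + ((h:ℝ)-1)*γ₁) - g*h*γ^2 := by
    nlinarith [mul_le_mul hPg hQh (by positivity) (by linarith),
      mul_nonneg hη.le h0, mul_pos hη hη, mul_nonneg (mul_nonneg hη.le h0) (by linarith : (0:ℝ) ≤ (h:ℝ)),
      mul_nonneg (mul_nonneg hη.le h0) (by linarith : (0:ℝ) ≤ (g:ℝ))]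
  have hDtpos : (0:ℝ) < (1 + ((g:ℝ)-1)*γ₂) * (1 + ((h:ℝ)-1)*t) - g*h*t^2 := by
    nlinarith [mul_le_mul hPgt hQht (by positivity) (by linarith),
      mul_nonneg hη.le h0t, mul_pos hη hη, mul_nonneg (mul_nonneg hη.le h0t) (by linarith : (0:ℝ) ≤ (h:ℝ)),
      mul_nonneg (mul_nonneg hη.le h0t) (by linarith : (0:ℝ) ≤ (g:ℝ))]
  rw [chi_formula g h γ₂ γ₁ γ (by linarith) (by linarith) (by linarith) (by linarith)
      (by linarith),
    chi_formula g h γ₂ t t (by linarith) (by linarith) (by linarith) (by linarith)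
      (by linarith)]
  rw [div_le_div_iff₀ hDtpos hDpos]
  have hQeq : 1 + ((h:ℝ)-1)*γ₁ = 1 + (h:ℝ)*t - γ := by linarith
  rw [hQeq]
  have A1 : 0 ≤ (t-γ)*((g:ℝ)^2*(1-γ)*(1-t) - ((g:ℝ)-(1 + ((g:ℝ)-1)*γ₂))^2) := by
    apply mul_nonneg (by linarith)
    have e1 : ((g:ℝ)-(1 + ((g:ℝ)-1)*γ₂)) = ((g:ℝ)-1)*(1-γ₂) := by ring
    rw [e1]
    nlinarith [mul_le_mul (by nlinarith : ((g:ℝ)-1)*(1-γ₂) ≤ g*(1-γ))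
      (by nlinarith : ((g:ℝ)-1)*(1-γ₂) ≤ g*(1-t)) (by nlinarith) (by nlinarith)]
  have A2 : 0 ≤ (t-γ)^2*((1 + ((g:ℝ)-1)*γ₂) - g*t) := by
    apply mul_nonneg (sq_nonneg _)
    nlinarith
  nlinarith [mul_nonneg (by linarith : (0:ℝ) ≤ (h:ℝ)) A1,
    mul_nonneg (mul_nonneg (by linarith : (0:ℝ) ≤ (g:ℝ))
      (mul_nonneg (by linarith : (0:ℝ) ≤ (h:ℝ)) (by linarith : (0:ℝ) ≤ (h:ℝ)))) A2]
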